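/- arXiv:2605.05039 — 9 statements merged into one kernel-verified Lean document; each statement's English description precedes it below -/
import Mathlib

section
/- Let e ≥ 2, K a field of characteristic 0 with Gal(K(ζ_e)/K) ≅ (Z/eZ)×, and let d ∈ (Z/eZ)×. Let σ_{-d} be the K-automorphism of K(ζ_e) sending ζ_e to ζ_e^{-d}. If E_{p₁} and E_{p₂} are generalized Jacobi sums for p₁, p₂ ∈ K× with respect to parameters v₁, v₂ (with e·v₁/2, e·v₂/2 ∈ ℤ), then the function E(a,b) := -σ_{-d}(E_{p₁}(a,b))·E_{p₂}(a,b) satisfies all seven axioms of a generalized Jacobi sum for p₁·p₂ with respect to the parameter v₁+v₂. -/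
open Finset

/-- Thaine's generalized Jacobi sum axioms for `p ∈ Kˣ` with parameter `v`, where
`σ c` denotes the Galois automorphism of `K(ζ_e)/K` sending `ζ_e ↦ ζ_e^c`. -/
def IsGenJacobiSum (e : ℕ) {K L : Type*} [Field K] [Field L] [Algebra K L]
    (σ : (ZMod e)ˣ → (L ≃ₐ[K] L)) (p : K) (v : ℤ) (E : ℤ → ℤ → L) : Prop :=
  (∀ a b : ℤ, E (a + e) b = E a b ∧ E a (b + e) = E a b) ∧
  (∀ a b : ℤ, E a b = E b a) ∧
  (∀ a b : ℤ, E a b = (-1 : L) ^ (v * b) * E (-a - b) b) ∧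
  (∀ a : ℤ, ¬ (e : ℤ) ∣ a → E a 0 = -1) ∧
  (∀ a b : ℤ, ¬ (e : ℤ) ∣ a → ¬ (e : ℤ) ∣ b → ¬ (e : ℤ) ∣ (a + b) →
      E a b * E (-a) (-b) = algebraMap K L p) ∧
  (∀ a b c : ℤ, ¬ (e : ℤ) ∣ (a + b) → ¬ (e : ℤ) ∣ (a + c) → ¬ (e : ℤ) ∣ (a + b + c) →
      E a b * E (-a) (-c)
        = (-1 : L) ^ (v * (b + c)) * E (-(a + b + c)) b * E (a + b + c) (-c)) ∧
  (∀ (c : (ZMod e)ˣ) (a b : ℤ),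
      σ c (E a b) = E (((c : ZMod e).val : ℤ) * a) (((c : ZMod e).val : ℤ) * b))

/-- The `d`-composition `-σ_{-d}(E_{p₁}(a,b))·E_{p₂}(a,b)` of two generalized Jacobi sums is a
generalized Jacobi sum for `p₁p₂` with parameter `v₁ + v₂` (Theorem 1.1(1)). -/
theorem genJacobiSum_dComp (e : ℕ) [NeZero e] (he : 2 ≤ e)
    {K L : Type*} [Field K] [CharZero K] [Field L] [Algebra K L]
    (ζ : L) (hζ : IsPrimitiveRoot ζ e)
    (σ : (ZMod e)ˣ → (L ≃ₐ[K] L))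
    (hσζ : ∀ c : (ZMod e)ˣ, σ c ζ = ζ ^ (c : ZMod e).val)
    (hσmul : ∀ c₁ c₂ : (ZMod e)ˣ, σ (c₁ * c₂) = σ c₁ * σ c₂)
    (d : (ZMod e)ˣ)
    (p₁ p₂ : K) (hp₁ : p₁ ≠ 0) (hp₂ : p₂ ≠ 0)
    (v₁ v₂ : ℤ) (hv₁ : Even ((e : ℤ) * v₁)) (hv₂ : Even ((e : ℤ) * v₂))
    (E₁ E₂ : ℤ → ℤ → L)
    (hE₁ : IsGenJacobiSum e σ p₁ v₁ E₁) (hE₂ : IsGenJacobiSum e σ p₂ v₂ E₂) :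
    IsGenJacobiSum e σ (p₁ * p₂) (v₁ + v₂)
      (fun a b => -(σ (-d) (E₁ a b)) * E₂ a b) := by

  obtain ⟨h1₁, h2₁, h3₁, h4₁, h5₁, h6₁, h7₁⟩ := hE₁
  obtain ⟨h1₂, h2₂, h3₂, h4₂, h5₂, h6₂, h7₂⟩ := hE₂
  have hne : (-1 : L) ≠ 0 := by norm_num
  refine ⟨?_, ?_, ?_, ?_, ?_, ?_, ?_⟩
  · intro a b
    dsimp only
    exact ⟨by rw [(h1₁ a b).1, (h1₂ a b).1], by rw [(h1₁ a b).2, (h1₂ a b).2]⟩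
  · intro a b
    dsimp only
    rw [h2₁ a b, h2₂ a b]
  · intro a b
    dsimp only
    have e1 := h3₁ a b
    have e2 := h3₂ a b
    rw [e1, e2, map_mul, map_zpow₀, map_neg, map_one, add_mul,
      zpow_add₀ hne]
    ring
  · intro a ha
    dsimp only
    rw [h4₁ a ha, h4₂ a ha, map_neg, map_one]
    ring
  · intro a b ha hb hab
    dsimp only
    have key : (-(σ (-d) (E₁ a b)) * E₂ a b) * (-(σ (-d) (E₁ (-a) (-b))) * E₂ (-a) (-b))
        = σ (-d) (E₁ a b * E₁ (-a) (-b)) * (E₂ a b * E₂ (-a) (-b)) := by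
      rw [map_mul]; ring
    rw [key, h5₁ a b ha hb hab, h5₂ a b ha hb hab, AlgEquiv.commutes, map_mul]
  · intro a b c hab hac habc
    dsimp only
    have key : (-(σ (-d) (E₁ a b)) * E₂ a b) * (-(σ (-d) (E₁ (-a) (-c))) * E₂ (-a) (-c))
        = σ (-d) (E₁ a b * E₁ (-a) (-c)) * (E₂ a b * E₂ (-a) (-c)) := by
      rw [map_mul]; ring
    rw [key, h6₁ a b c hab hac habc, h6₂ a b c hab hac habc, map_mul, map_mul,
      map_zpow₀, map_neg, map_one, add_mul, zpow_add₀ hne]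
    ring
  · intro c a b
    dsimp only
    have comm : ∀ x : L, σ c (σ (-d) x) = σ (-d) (σ c x) := by
      intro x
      have h : σ c * σ (-d) = σ (-d) * σ c := by
        rw [← hσmul, ← hσmul, mul_comm]
      have := DFunLike.congr_fun h x
      simpa using this
    show σ c (-(σ (-d) (E₁ a b)) * E₂ a b) = _
    rw [map_mul, map_neg, comm, h7₁, h7₂]
end

section
/- Let l be an odd prime and K a field with char K ≠ 2, l and Gal(K(ζ_l)/K) ≅ (Z/lZ)×. Suppose α = Σ_{k=0}^{l-1} a_k ζ_l^k with a_k ∈ K satisfies α·σ_{-1}(α) = p for some p ∈ K×, where σ_{-1}(ζ_l) = ζ_l^{-1}. If a_0 = 0, then: (1) p = Σ_{k=0}^{l-1} a_k² - Σ_{k=0}^{l-1} a_k a_{k+1}, and (2) Σ_{k=0}^{l-1} a_k a_{k+1} = Σ_{k=0}^{l-1} a_k a_{k+m} for all 2 ≤ m ≤ (l-1)/2, where all subscripts are taken mod l. -/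
open Finset

theorem zmod_sum_to_range {M : Type*} [AddCommMonoid M] (l : ℕ) [NeZero l]
    (f : ZMod l → M) : ∑ d : ZMod l, f d = ∑ n ∈ Finset.range l, f n := by
  refine Finset.sum_nbij' (fun d => d.val) (fun n => (n : ZMod l)) ?_ ?_ ?_ ?_ ?_
  · intro d _; exact Finset.mem_range.mpr (ZMod.val_lt d)
  · intro n _; exact Finset.mem_univ _
  · intro d _; exact ZMod.natCast_rightInverse d
  · intro n hn; exact ZMod.val_cast_of_lt (Finset.mem_range.mp hn)
  · intro d _; rw [ZMod.natCast_rightInverse d]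

/-- Lemma 4.3: if `α = Σ a_k ζ_l^k` (with `a₀ = 0`) satisfies `α·σ₋₁(α) = p`, then
`p = Σ a_k² - Σ a_k a_{k+1}` and the correlation sums `Σ a_k a_{k+m}` agree for
`1 ≤ m ≤ (l-1)/2`. -/
theorem coeff_relations_of_norm (l : ℕ) [NeZero l] (hl : l.Prime) (hodd : Odd l)
    {K L : Type*} [Field K] [Field L] [Algebra K L]
    (h2 : (2 : K) ≠ 0) (hlK : (l : K) ≠ 0)
    (ζ : L) (hζ : IsPrimitiveRoot ζ l)
    (hind : LinearIndependent K fun i : Fin (l - 1) => ζ ^ ((i : ℕ) + 1))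
    (a : ZMod l → K) (ha0 : a 0 = 0) (p : K) (hp : p ≠ 0)
    (hnorm : (∑ k : ZMod l, algebraMap K L (a k) * ζ ^ k.val) *
        (∑ k : ZMod l, algebraMap K L (a k) * ζ ^ (-k).val) = algebraMap K L p) :
    (p = ∑ k : ZMod l, a k ^ 2 - ∑ k : ZMod l, a k * a (k + 1)) ∧
    (∀ m : ℕ, 2 ≤ m → m ≤ (l - 1) / 2 →
      ∑ k : ZMod l, a k * a (k + 1) = ∑ k : ZMod l, a k * a (k + (m : ZMod l))) := by
  haveI : Fact (1 < l) := ⟨hl.one_lt⟩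
  have hone : ζ ^ l = 1 := hζ.pow_eq_one
  set b : ZMod l → K := fun d => ∑ k : ZMod l, a (k + d) * a k with hb_def
  have hmul : ∀ j k : ZMod l, ζ ^ j.val * ζ ^ (-k).val = ζ ^ (j - k).val := by
    intro j k
    rw [← pow_add, pow_eq_pow_mod _ hone]
    congr 1
    rw [sub_eq_add_neg, ZMod.val_add]
  -- key identity
  have key : ∑ d : ZMod l, algebraMap K L (b d) * ζ ^ d.val = algebraMap K L p := by
    have step1 : ∀ k : ZMod l,
        (∑ j : ZMod l, (algebraMap K L (a j) * ζ ^ j.val) *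
          (algebraMap K L (a k) * ζ ^ (-k).val))
        = ∑ d : ZMod l, algebraMap K L (a (k + d) * a k) * ζ ^ d.val := by
      intro k
      refine (Fintype.sum_equiv (Equiv.addLeft k) _ _ fun d => ?_).symm
      simp only [Equiv.coe_addLeft]
      rw [map_mul, mul_mul_mul_comm, hmul, add_sub_cancel_left]
    have expand : (∑ k : ZMod l, algebraMap K L (a k) * ζ ^ k.val) *
        (∑ k : ZMod l, algebraMap K L (a k) * ζ ^ (-k).val)
        = ∑ d : ZMod l, algebraMap K L (b d) * ζ ^ d.val := by
      rw [Finset.sum_mul_sum, Finset.sum_comm]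
      rw [Finset.sum_congr rfl (fun k _ => step1 k), Finset.sum_comm]
      refine Finset.sum_congr rfl fun d _ => ?_
      rw [show b d = ∑ k : ZMod l, a (k + d) * a k from rfl, map_sum, Finset.sum_mul]
    rw [← hnorm, expand]
  -- rewrite as sum over range l
  have key2 : ∑ n ∈ Finset.range l, algebraMap K L (b n) * ζ ^ n = algebraMap K L p := by
    rw [← key, zmod_sum_to_range l (fun d => algebraMap K L (b d) * ζ ^ d.val)]
    refine Finset.sum_congr rfl fun n hn => ?_
    rw [ZMod.val_cast_of_lt (Finset.mem_range.mp hn)]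
  have hl1 : l - 1 + 1 = l := Nat.succ_pred_eq_of_pos hl.pos
  have hsplit := Finset.sum_range_succ'
    (fun n : ℕ => algebraMap K L (b ((n : ℕ) : ZMod l)) * ζ ^ n) (l - 1)
  rw [hl1] at hsplit
  have key3 : ∑ n ∈ Finset.range (l - 1),
      algebraMap K L (b (((n + 1 : ℕ)) : ZMod l)) * ζ ^ (n + 1)
      = algebraMap K L p - algebraMap K L (b 0) := by
    rw [← key2, hsplit]
    norm_num
  have hgeom : ∑ n ∈ Finset.range (l - 1), ζ ^ (n + 1) = -1 := by
    have h0 := hζ.geom_sum_eq_zero hl.one_lt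
    rw [← hl1, Finset.sum_range_succ'] at h0
    simpa using eq_neg_of_add_eq_zero_left h0
  -- linear independence step
  have hzero : ∀ i : Fin (l - 1),
      b ((((i : ℕ) + 1 : ℕ)) : ZMod l) - b 0 + p = 0 := by
    have hz : ∑ i : Fin (l - 1),
        (b ((((i : ℕ) + 1 : ℕ)) : ZMod l) - b 0 + p) • ζ ^ ((i : ℕ) + 1) = 0 := by
      have hterm : ∀ i : Fin (l - 1),
          (b ((((i : ℕ) + 1 : ℕ)) : ZMod l) - b 0 + p) • ζ ^ ((i : ℕ) + 1)
          = algebraMap K L (b ((((i : ℕ) + 1 : ℕ)) : ZMod l)) * ζ ^ ((i : ℕ) + 1)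
            - algebraMap K L (b 0 - p) * ζ ^ ((i : ℕ) + 1) := by
        intro i
        rw [Algebra.smul_def, map_add, map_sub, map_sub]
        ring
      rw [Finset.sum_congr rfl fun i _ => hterm i, Finset.sum_sub_distrib,
        ← Finset.mul_sum,
        Fin.sum_univ_eq_sum_range
          (fun n : ℕ => algebraMap K L (b (((n + 1 : ℕ)) : ZMod l)) * ζ ^ (n + 1)) (l - 1),
        Fin.sum_univ_eq_sum_range (fun n : ℕ => ζ ^ (n + 1)) (l - 1),
        hgeom, key3, map_sub]
      ring
    intro i
    exact Fintype.linearIndependent_iff.mp hind _ hz i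
  have hb : ∀ d : ZMod l, d ≠ 0 → b d = b 0 - p := by
    intro d hd
    have hv : d.val ≠ 0 := fun h => hd ((ZMod.val_eq_zero d).mp h)
    have hvl : d.val < l := ZMod.val_lt d
    have hn : d.val - 1 < l - 1 := by omega
    have h := hzero ⟨d.val - 1, hn⟩
    have hrw : (d.val - 1 : ℕ) + 1 = d.val := by omega
    simp only [hrw] at h
    rw [ZMod.natCast_rightInverse d] at h
    linear_combination h
  have hb0 : b 0 = ∑ k : ZMod l, a k ^ 2 := by
    refine Finset.sum_congr rfl fun k _ => ?_
    rw [add_zero, sq]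
  have hb1 : b 1 = ∑ k : ZMod l, a k * a (k + 1) := by
    refine Finset.sum_congr rfl fun k _ => ?_
    rw [mul_comm]
  have h1ne : (1 : ZMod l) ≠ 0 := one_ne_zero
  have e1 := hb 1 h1ne
  constructor
  · linear_combination hb0 - hb1 + e1
  · intro m hm2 hml
    have hmlt : m < l := by omega
    have hmne : (m : ZMod l) ≠ 0 := by
      intro h
      have hv := ZMod.val_cast_of_lt hmlt
      rw [h, ZMod.val_zero] at hv
      omega
    have em := hb (m : ZMod l) hmne
    have hbm : b (m : ZMod l) = ∑ k : ZMod l, a k * a (k + (m : ZMod l)) := by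
      refine Finset.sum_congr rfl fun k _ => ?_
      rw [mul_comm]
    linear_combination -hb1 + hbm + e1 - em
end

section
/- Let l be an odd prime with l ≡ 1 mod f, l = ef+1, K a field with char K ∤ f!·l and Gal(K(ζ_l)/K) ≅ (Z/lZ)× = ⟨γ⟩. Set β = γ^e, L = K(ζ_l), and M = L^⟨β⟩, so Gal(L/M) is cyclic of order f generated by ζ_l ↦ ζ_l^β. Let α = Σ_{k=1}^{l-1} a_k ζ_l^k (a_0 = 0) satisfy N_{L/M}(α) = p ∈ K×. Define S_0 = Σ_{i_0+βi_1+⋯+β^{f-1}i_{f-1} ≡ 0 (mod l)} a_{i_0}⋯a_{i_{f-1}} and, for 1 ≤ m ≤ e, S_m = Σ_{i_0+βi_1+⋯+β^{f-1}i_{f-1} ≡ γ^m (mod l)} a_{i_0}⋯a_{i_{f-1}} (indices mod l, a_0=0). Then p = S_0 - S_1 and S_1 = S_2 = ⋯ = S_e. -/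
open Finset

section Aux

variable {l : ℕ} {L : Type*} [Field L] {ζ : L}

lemma zmod_pow_mod (hζ : IsPrimitiveRoot ζ l) (n : ℕ) : ζ ^ (n % l) = ζ ^ n := by
  conv_rhs => rw [← Nat.div_add_mod n l]
  rw [pow_add, pow_mul, hζ.pow_eq_one, one_pow, one_mul]

variable [NeZero l]

lemma zmod_pow_add (hζ : IsPrimitiveRoot ζ l) (x y : ZMod l) :
    ζ ^ (x + y).val = ζ ^ x.val * ζ ^ y.val := by
  rw [← pow_add, ZMod.val_add, zmod_pow_mod hζ]

lemma zmod_pow_mul (hζ : IsPrimitiveRoot ζ l) (x y : ZMod l) :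
    ζ ^ (x * y).val = (ζ ^ x.val) ^ y.val := by
  rw [← pow_mul, ZMod.val_mul, zmod_pow_mod hζ]

lemma zmod_pow_sum (hζ : IsPrimitiveRoot ζ l) {ι : Type*} (s : Finset ι) (c : ι → ZMod l) :
    ζ ^ (∑ j ∈ s, c j).val = ∏ j ∈ s, ζ ^ (c j).val := by
  classical
  induction s using Finset.induction_on with
  | empty => simp [ZMod.val_zero]
  | insert _ _ h ih =>
      rw [Finset.sum_insert h, Finset.prod_insert h, zmod_pow_add hζ, ih]

end Aux

/-- Lemma 5.2: if `α = Σ_{k=1}^{l-1} a_k ζ_l^k` satisfies `N_{L/M}(α) = p ∈ Kˣ`, where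
`M` is the fixed field of `σ : ζ_l ↦ ζ_l^β` with `β = γ^e`, then `p = S₀ - S₁` and
`S₁ = S₂ = ⋯ = S_e` for the correlation sums `S_m`. -/
theorem norm_correlation_sums (l e f : ℕ) [NeZero l] (hl : l.Prime) (hodd : Odd l)
    (hf : 2 ≤ f) (hlef : l = e * f + 1)
    {K L : Type*} [Field K] [Field L] [Algebra K L]
    (hcharf : (Nat.factorial f : K) ≠ 0) (hlK : (l : K) ≠ 0)
    (ζ : L) (hζ : IsPrimitiveRoot ζ l)
    (hind : LinearIndependent K fun i : Fin (l - 1) => ζ ^ ((i : ℕ) + 1))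
    (γ : (ZMod l)ˣ) (hγ : ∀ u : (ZMod l)ˣ, u ∈ Subgroup.zpowers γ)
    (σ : L ≃ₐ[K] L) (hσ : σ ζ = ζ ^ (((γ ^ e : (ZMod l)ˣ) : ZMod l)).val)
    (a : ZMod l → K) (ha0 : a 0 = 0) (p : K) (hp : p ≠ 0)
    (hnorm : (∏ t ∈ Finset.range f,
        (σ ^ t) (∑ k : ZMod l, algebraMap K L (a k) * ζ ^ k.val)) = algebraMap K L p) :
    letI β : ZMod l := ((γ ^ e : (ZMod l)ˣ) : ZMod l)
    letI S : ZMod l → K := fun c =>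
      ∑ v : Fin f → ZMod l,
        if (∑ j : Fin f, β ^ (j : ℕ) * v j) = c then ∏ j : Fin f, a (v j) else 0
    p = S 0 - S (γ : ZMod l) ∧
      ∀ m : ℕ, 1 ≤ m → m ≤ e → S (γ : ZMod l) = S (((γ : ZMod l)) ^ m) := by
  haveI : Fact l.Prime := ⟨hl⟩
  haveI : Fact (1 < l) := ⟨hl.one_lt⟩
  classical
  set β : ZMod l := ((γ ^ e : (ZMod l)ˣ) : ZMod l) with hβ
  set S : ZMod l → K := fun c =>
    ∑ v : Fin f → ZMod l,
      if (∑ j : Fin f, β ^ (j : ℕ) * v j) = c then ∏ j : Fin f, a (v j) else 0 with hS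
  -- σ^t ζ = ζ^{(β^t).val}
  have hσt : ∀ t : ℕ, (σ ^ t) ζ = ζ ^ (β ^ t).val := by
    intro t
    induction t with
    | zero => simp [ZMod.val_one]
    | succ t ih =>
        rw [pow_succ', AlgEquiv.mul_apply, ih, map_pow, hσ, ← zmod_pow_mul hζ, ← pow_succ']
  -- the key identity
  have key : ∑ c : ZMod l, algebraMap K L (S c) * ζ ^ c.val = algebraMap K L p := by
    rw [← hnorm]
    have h1 : ∀ t ∈ Finset.range f, (σ ^ t) (∑ k : ZMod l, algebraMap K L (a k) * ζ ^ k.val)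
        = ∑ k : ZMod l, algebraMap K L (a k) * ζ ^ ((β ^ t * k)).val := by
      intro t _
      rw [map_sum]
      refine Finset.sum_congr rfl fun k _ => ?_
      rw [map_mul, AlgEquiv.commutes, map_pow, hσt t, zmod_pow_mul hζ]
    rw [Finset.prod_congr rfl h1, ← Fin.prod_univ_eq_prod_range
      (fun t => ∑ k : ZMod l, algebraMap K L (a k) * ζ ^ ((β ^ t * k)).val),
      Finset.prod_univ_sum]
    rw [Fintype.piFinset_univ]
    have h2 : ∀ v : Fin f → ZMod l,
        (∏ j : Fin f, (algebraMap K L (a (v j)) * ζ ^ ((β ^ (j : ℕ) * v j)).val))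
        = algebraMap K L (∏ j : Fin f, a (v j)) * ζ ^ (∑ j : Fin f, β ^ (j : ℕ) * v j).val := by
      intro v
      rw [Finset.prod_mul_distrib, map_prod, zmod_pow_sum hζ]
    rw [Finset.sum_congr rfl fun v _ => h2 v]
    rw [← Finset.sum_fiberwise Finset.univ (fun v : Fin f → ZMod l =>
      ∑ j : Fin f, β ^ (j : ℕ) * v j) (fun v =>
        algebraMap K L (∏ j : Fin f, a (v j)) * ζ ^ (∑ j : Fin f, β ^ (j : ℕ) * v j).val)]
    refine Finset.sum_congr rfl fun c _ => ?_
    have h3 : ∀ v ∈ Finset.univ.filter (fun v : Fin f → ZMod l =>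
        (∑ j : Fin f, β ^ (j : ℕ) * v j) = c),
        algebraMap K L (∏ j : Fin f, a (v j)) * ζ ^ (∑ j : Fin f, β ^ (j : ℕ) * v j).val
        = algebraMap K L (∏ j : Fin f, a (v j)) * ζ ^ c.val := by
      intro v hv
      rw [(Finset.mem_filter.mp hv).2]
    rw [Finset.sum_congr rfl h3, ← Finset.sum_mul, ← map_sum]
    congr 2
    rw [hS, Finset.sum_filter]
  -- values of small casts
  have hval : ∀ i : Fin (l - 1), ((((i : ℕ) + 1 : ℕ) : ZMod l)).val = (i : ℕ) + 1 := by
    intro i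
    have h2 := i.2
    exact ZMod.val_natCast_of_lt (by omega)
  -- geometric sum
  have hgeo : ∑ i : Fin (l - 1), ζ ^ ((i : ℕ) + 1) = -1 := by
    have h0 : ∑ i ∈ Finset.range l, ζ ^ i = 0 := hζ.geom_sum_eq_zero hl.one_lt
    have hl1 : l - 1 + 1 = l := Nat.succ_pred_eq_of_pos hl.pos
    rw [← hl1, Finset.sum_range_succ'] at h0
    rw [Fin.sum_univ_eq_sum_range (fun i => ζ ^ (i + 1))]
    rw [pow_zero] at h0
    linear_combination h0
  -- split the key sum
  have hsplit : ∑ c : ZMod l, algebraMap K L (S c) * ζ ^ c.val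
      = algebraMap K L (S 0)
        + ∑ i : Fin (l - 1), algebraMap K L (S ((((i : ℕ) + 1 : ℕ) : ZMod l))) * ζ ^ ((i : ℕ) + 1) := by
    rw [← Finset.add_sum_erase Finset.univ _ (Finset.mem_univ (0 : ZMod l))]
    rw [ZMod.val_zero, pow_zero, mul_one]
    congr 1
    have hl2 : 1 < l := hl.one_lt
    refine Finset.sum_nbij'
      (fun c : ZMod l => (⟨c.val - 1, by have := ZMod.val_lt c; omega⟩ : Fin (l - 1)))
      (fun i : Fin (l - 1) => (((i : ℕ) + 1 : ℕ) : ZMod l)) (fun c _ => Finset.mem_univ _)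
      ?_ ?_ ?_ ?_
    · intro i _
      refine Finset.mem_erase.mpr ⟨?_, Finset.mem_univ _⟩
      intro h
      have h' : ((((i : ℕ) + 1 : ℕ)) : ZMod l) = 0 := h
      have := hval i
      rw [h', ZMod.val_zero] at this
      omega
    · intro c hc
      have hc0 : c ≠ 0 := (Finset.mem_erase.mp hc).1
      have hc1 : 1 ≤ c.val := by
        rcases Nat.eq_zero_or_pos c.val with h | h
        · exact absurd ((ZMod.val_eq_zero c).mp h) hc0
        · exact h
      show ((c.val - 1 + 1 : ℕ) : ZMod l) = c
      rw [Nat.sub_add_cancel hc1]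
      exact ZMod.natCast_rightInverse c
    · intro i _
      have hvi := hval i
      refine Fin.ext ?_
      show ((((i : ℕ) + 1 : ℕ) : ZMod l)).val - 1 = (i : ℕ)
      omega
    · intro c hc
      have hc0 : c ≠ 0 := (Finset.mem_erase.mp hc).1
      have hc1 : 1 ≤ c.val := by
        rcases Nat.eq_zero_or_pos c.val with h | h
        · exact absurd ((ZMod.val_eq_zero c).mp h) hc0
        · exact h
      have hcv : ((c.val - 1 + 1 : ℕ) : ZMod l) = c := by
        rw [Nat.sub_add_cancel hc1]; exact ZMod.natCast_rightInverse c
      show algebraMap K L (S c) * ζ ^ c.val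
        = algebraMap K L (S (((c.val - 1 + 1 : ℕ) : ZMod l))) * ζ ^ (c.val - 1 + 1)
      rw [hcv]
      congr 2
      omega
  -- the rest of the sum
  have hrest : ∑ i : Fin (l - 1), algebraMap K L (S ((((i : ℕ) + 1 : ℕ) : ZMod l))) * ζ ^ ((i : ℕ) + 1)
      = algebraMap K L (p - S 0) := by
    rw [hsplit] at key
    rw [map_sub]
    linear_combination key
  -- the zero linear combination
  have hzero : ∑ i : Fin (l - 1),
      (S ((((i : ℕ) + 1 : ℕ) : ZMod l)) - (S 0 - p)) • ζ ^ ((i : ℕ) + 1) = 0 := by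
    have expand : ∀ i : Fin (l - 1),
        (S ((((i : ℕ) + 1 : ℕ) : ZMod l)) - (S 0 - p)) • ζ ^ ((i : ℕ) + 1)
        = algebraMap K L (S ((((i : ℕ) + 1 : ℕ) : ZMod l))) * ζ ^ ((i : ℕ) + 1)
          - (S 0 - p) • ζ ^ ((i : ℕ) + 1) := by
      intro i
      rw [sub_smul, Algebra.smul_def]
    rw [Finset.sum_congr rfl fun i _ => expand i, Finset.sum_sub_distrib, hrest,
      ← Finset.smul_sum, hgeo, Algebra.smul_def, map_sub, map_sub]
    ring
  -- linear independence
  have hcoef := Fintype.linearIndependent_iff.mp hind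
    (fun i : Fin (l - 1) => S ((((i : ℕ) + 1 : ℕ) : ZMod l)) - (S 0 - p)) hzero
  have hall : ∀ c : ZMod l, c ≠ 0 → S c = S 0 - p := by
    intro c hc0
    have hc1 : 1 ≤ c.val := by
      rcases Nat.eq_zero_or_pos c.val with h | h
      · exact absurd ((ZMod.val_eq_zero c).mp h) hc0
      · exact h
    have hclt : c.val - 1 < l - 1 := by have := ZMod.val_lt c; omega
    have h := hcoef ⟨c.val - 1, hclt⟩
    have hcv : ((c.val - 1 + 1 : ℕ) : ZMod l) = c := by
      rw [Nat.sub_add_cancel hc1]; exact ZMod.natCast_rightInverse c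
    simp only [hcv] at h
    exact sub_eq_zero.mp h
  have hγ0 : (γ : ZMod l) ≠ 0 := Units.ne_zero γ
  constructor
  · rw [hall _ hγ0]; ring
  · intro m _ _
    rw [hall _ hγ0, hall _ (pow_ne_zero m hγ0)]
end

section
/- Let K be a field, and define on K⁴ the forms q(x) = x₁²+x₂²+x₃²+x₄² - (x₁x₂+x₂x₃+x₃x₄) and f₁(x) = (x₁x₂+x₂x₃+x₃x₄) - (x₁x₃+x₂x₄+x₄x₁). For d = 1, define z_k = -(Σ_{i=1}^{4} x_{-i} y_{k-i} - Σ_{i=1}^{4} x_{-i} y_{-i}) for k = 1,…,4, with subscripts mod 5 and x₀ = y₀ = 0. Then the polynomial identities q(z) = q(x)q(y) + f₁(x)f₁(y) and f₁(z) = q(x)f₁(y) + f₁(x)q(y) + f₁(x)f₁(y) hold in K[x₁,…,x₄,y₁,…,y₄]. In particular, if f₁(x) = f₁(y) = 0 then q(z) = q(x)q(y) and f₁(z) = 0. -/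
/-- The quadratic form `q` of the case `l = 5`. -/
def q5 {K : Type*} [Field K] (x₁ x₂ x₃ x₄ : K) : K :=
  x₁ ^ 2 + x₂ ^ 2 + x₃ ^ 2 + x₄ ^ 2 - (x₁ * x₂ + x₂ * x₃ + x₃ * x₄)

/-- The quadric `f₁` of the case `l = 5`. -/
def f5 {K : Type*} [Field K] (x₁ x₂ x₃ x₄ : K) : K :=
  (x₁ * x₂ + x₂ * x₃ + x₃ * x₄) - (x₁ * x₃ + x₂ * x₄ + x₄ * x₁)

/-- Polynomial identities for the `d = 1` composition in the case `l = 5`: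
`q(z) = q(x)q(y) + f₁(x)f₁(y)` and `f₁(z) = q(x)f₁(y) + f₁(x)q(y) + f₁(x)f₁(y)`;
in particular `q` is multiplicative on the variety `{f₁ = 0}`. -/
theorem mult_quadratic_l5 {K : Type*} [Field K] (x₁ x₂ x₃ x₄ y₁ y₂ y₃ y₄ : K) :
    letI S : K := x₄ * y₄ + x₃ * y₃ + x₂ * y₂ + x₁ * y₁
    letI z₁ : K := -(x₃ * y₄ + x₂ * y₃ + x₁ * y₂) + S
    letI z₂ : K := -(x₄ * y₁ + x₂ * y₄ + x₁ * y₃) + S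
    letI z₃ : K := -(x₄ * y₂ + x₃ * y₁ + x₁ * y₄) + S
    letI z₄ : K := -(x₄ * y₃ + x₃ * y₂ + x₂ * y₁) + S
    (q5 z₁ z₂ z₃ z₄ = q5 x₁ x₂ x₃ x₄ * q5 y₁ y₂ y₃ y₄ + f5 x₁ x₂ x₃ x₄ * f5 y₁ y₂ y₃ y₄) ∧
    (f5 z₁ z₂ z₃ z₄ = q5 x₁ x₂ x₃ x₄ * f5 y₁ y₂ y₃ y₄ + f5 x₁ x₂ x₃ x₄ * q5 y₁ y₂ y₃ y₄
        + f5 x₁ x₂ x₃ x₄ * f5 y₁ y₂ y₃ y₄) ∧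
    (f5 x₁ x₂ x₃ x₄ = 0 → f5 y₁ y₂ y₃ y₄ = 0 →
      q5 z₁ z₂ z₃ z₄ = q5 x₁ x₂ x₃ x₄ * q5 y₁ y₂ y₃ y₄ ∧ f5 z₁ z₂ z₃ z₄ = 0) := by
  have h1 : ∀ a b c d e f g h : K,
      q5 (-(c*h+b*g+a*f)+(d*h+c*g+b*f+a*e)) (-(d*e+b*h+a*g)+(d*h+c*g+b*f+a*e))
         (-(d*f+c*e+a*h)+(d*h+c*g+b*f+a*e)) (-(d*g+c*f+b*e)+(d*h+c*g+b*f+a*e))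
        = q5 a b c d * q5 e f g h + f5 a b c d * f5 e f g h := by
    intros; simp only [q5, f5]; ring
  have h2 : ∀ a b c d e f g h : K,
      f5 (-(c*h+b*g+a*f)+(d*h+c*g+b*f+a*e)) (-(d*e+b*h+a*g)+(d*h+c*g+b*f+a*e))
         (-(d*f+c*e+a*h)+(d*h+c*g+b*f+a*e)) (-(d*g+c*f+b*e)+(d*h+c*g+b*f+a*e))
        = q5 a b c d * f5 e f g h + f5 a b c d * q5 e f g h + f5 a b c d * f5 e f g h := by
    intros; simp only [q5, f5]; ring
  refine ⟨h1 .., h2 .., fun hx hy => ⟨?_, ?_⟩⟩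
  · rw [h1, hx]; ring
  · rw [h2, hx, hy]; ring
end

section
/- Let p, q be primes (not necessarily distinct) and r, s positive integers with p^r ≡ 1 mod 5 and q^s ≡ 1 mod 5. Suppose integers (x₁,x₂,x₃,x₄) satisfy 16p^r = x₁² + 125x₂² + 50x₃² + 50x₄² and x₁x₂ = x₃² - 4x₃x₄ - x₄², and (y₁,y₂,y₃,y₄) satisfy the analogous system for q^s. Define z₁ = -(1/4)(x₁y₁ + 125x₂y₂ + 50x₃y₃ + 50x₄y₄), z₂ = -(1/4)(x₁y₂ + x₂y₁ - 2x₃y₃ + 4x₃y₄ + 4x₄y₃ + 2x₄y₄), z₃ = -(1/4)(x₁y₃ - 5x₂y₃ + 10x₂y₄ - x₃y₁ + 5x₃y₂ - 10x₄y₂), z₄ = -(1/4)(x₁y₄ + 10x₂y₃ + 5x₂y₄ - 10x₃y₂ - x₄y₁ - 5x₄y₂). Then 16p^r q^s = z₁² + 125z₂² + 50z₃² + 50z₄² and z₁z₂ = z₃² - 4z₃z₄ - z₄². -/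
/-- Composition law on solutions of Dickson's quintic Diophantine system: from integer solutions
for `p^r` and `q^s` one obtains a (rational) solution for `p^r q^s`. -/
theorem dickson_l5_composition (p q : ℕ) (hp : p.Prime) (hq : q.Prime)
    (r s : ℕ) (hr : 0 < r) (hs : 0 < s)
    (hpr : p ^ r % 5 = 1) (hqs : q ^ s % 5 = 1)
    (x₁ x₂ x₃ x₄ y₁ y₂ y₃ y₄ : ℤ)
    (hx1 : 16 * (p : ℤ) ^ r = x₁ ^ 2 + 125 * x₂ ^ 2 + 50 * x₃ ^ 2 + 50 * x₄ ^ 2)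
    (hx2 : x₁ * x₂ = x₃ ^ 2 - 4 * x₃ * x₄ - x₄ ^ 2)
    (hy1 : 16 * (q : ℤ) ^ s = y₁ ^ 2 + 125 * y₂ ^ 2 + 50 * y₃ ^ 2 + 50 * y₄ ^ 2)
    (hy2 : y₁ * y₂ = y₃ ^ 2 - 4 * y₃ * y₄ - y₄ ^ 2) :
    letI z₁ : ℚ := -(1 / 4) * ((x₁ : ℚ) * y₁ + 125 * x₂ * y₂ + 50 * x₃ * y₃ + 50 * x₄ * y₄)
    letI z₂ : ℚ := -(1 / 4) * ((x₁ : ℚ) * y₂ + x₂ * y₁ - 2 * x₃ * y₃ + 4 * x₃ * y₄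
        + 4 * x₄ * y₃ + 2 * x₄ * y₄)
    letI z₃ : ℚ := -(1 / 4) * ((x₁ : ℚ) * y₃ - 5 * x₂ * y₃ + 10 * x₂ * y₄ - x₃ * y₁
        + 5 * x₃ * y₂ - 10 * x₄ * y₂)
    letI z₄ : ℚ := -(1 / 4) * ((x₁ : ℚ) * y₄ + 10 * x₂ * y₃ + 5 * x₂ * y₄ - 10 * x₃ * y₂
        - x₄ * y₁ - 5 * x₄ * y₂)
    16 * (p : ℚ) ^ r * (q : ℚ) ^ s = z₁ ^ 2 + 125 * z₂ ^ 2 + 50 * z₃ ^ 2 + 50 * z₄ ^ 2 ∧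
      z₁ * z₂ = z₃ ^ 2 - 4 * z₃ * z₄ - z₄ ^ 2 := by
  have hx1Q : 16 * (p : ℚ) ^ r = (x₁:ℚ) ^ 2 + 125 * x₂ ^ 2 + 50 * x₃ ^ 2 + 50 * x₄ ^ 2 := by
    exact_mod_cast congrArg (fun t : ℤ => (t : ℚ)) hx1
  have hx2Q : (x₁:ℚ) * x₂ = x₃ ^ 2 - 4 * x₃ * x₄ - x₄ ^ 2 := by exact_mod_cast hx2
  have hy1Q : 16 * (q : ℚ) ^ s = (y₁:ℚ) ^ 2 + 125 * y₂ ^ 2 + 50 * y₃ ^ 2 + 50 * y₄ ^ 2 := by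
    exact_mod_cast congrArg (fun t : ℤ => (t : ℚ)) hy1
  have hy2Q : (y₁:ℚ) * y₂ = y₃ ^ 2 - 4 * y₃ * y₄ - y₄ ^ 2 := by exact_mod_cast hy2
  refine ⟨?_, ?_⟩
  · linear_combination ((q:ℚ)^s) * hx1Q
      + (((x₁:ℚ) ^ 2 + 125 * x₂ ^ 2 + 50 * x₃ ^ 2 + 50 * x₄ ^ 2)/16) * hy1Q
      - ((125/4) * (y₄:ℚ)^2 + 125 * y₃ * y₄ - (125/4) * y₃^2 + (125/4) * y₁ * y₂) * hx2Q
  · linear_combination ((25/8) * (y₄:ℚ)^2 + (25/8) * y₃^2 + (125/16) * y₂^2 + (1/16) * y₁^2) * hx2Q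
      + ((25/8) * (x₄:ℚ)^2 + (25/8) * x₃^2 + (125/16) * x₂^2 + (1/16) * x₁^2) * hy2Q
end

section
/- Let l be an odd prime, d ∈ (Z/lZ)×, f ≥ 1, and K a field. On K^{l-1} define x ∗_d y = z with z_k = (-1)^{f-1}(Σ_{i=1}^{l-1} x_{-d^{-1}i} y_{k-i} - Σ_{i=1}^{l-1} x_{-d^{-1}i} y_{-i}) (subscripts mod l, x₀ = y₀ = 0). Let 𝟙 := (-1)^f·(1,1,…,1) ∈ K^{l-1}. Then (𝟙 ∗_d x)_k = x_k and (x ∗_d 𝟙)_k = x_{-d^{-1}k} for all k. In particular 𝟙 is a two-sided identity for ∗_{-1}. -/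
open Finset

/-- Thaine's `d`-composition on `K^{l-1}`, realized on functions `ZMod l → K` vanishing at `0`:
`(x ∗_d y)_k = (-1)^{f-1}(Σ_i x_{-d⁻¹i} y_{k-i} - Σ_i x_{-d⁻¹i} y_{-i})`. -/
def starOp (l : ℕ) [NeZero l] {K : Type*} [Field K] (f : ℕ) (d : (ZMod l)ˣ)
    (x y : ZMod l → K) : ZMod l → K := fun k =>
  (-1 : K) ^ (f - 1) *
    ((∑ i : ZMod l, x (-(↑d⁻¹ : ZMod l) * i) * y (k - i)) -
      (∑ i : ZMod l, x (-(↑d⁻¹ : ZMod l) * i) * y (-i)))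

lemma starOp_key {K : Type*} [Field K] {l : ℕ} [NeZero l] (e : K) (g : ZMod l → K) (a : ZMod l) :
    ∑ i : ZMod l, (if i = a then 0 else e) * g i
      = e * (∑ i : ZMod l, g i) - e * g a := by
  have h : ∀ i : ZMod l, (if i = a then 0 else e) * g i
      = e * g i - (if i = a then e * g i else 0) := by
    intro i; split_ifs <;> ring
  simp only [h, Finset.sum_sub_distrib, Finset.sum_ite_eq' univ a, mem_univ, if_true,
    Finset.mul_sum]

lemma starOp_pow {K : Type*} [Field K] {f : ℕ} (hf : 1 ≤ f) :
    (-1 : K) ^ (f - 1) * (-1 : K) ^ f = -1 := by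
  have h : (-1 : K) ^ f = (-1 : K) ^ (f - 1) * (-1) := by
    rw [← pow_succ]; congr 1; omega
  have h2 : (-1 : K) ^ (f - 1) * (-1 : K) ^ (f - 1) = 1 := by
    rw [← pow_add]; exact Even.neg_one_pow ⟨f - 1, rfl⟩
  rw [h, ← mul_assoc, h2, one_mul]

lemma starOp_left (l : ℕ) [NeZero l] (hl : l.Prime)
    {K : Type*} [Field K] (f : ℕ) (hf : 1 ≤ f) (d : (ZMod l)ˣ)
    (x : ZMod l → K) (hx0 : x 0 = 0) (k : ZMod l) :
    starOp l f d (fun k => if k = 0 then 0 else (-1 : K) ^ f) x k = x k := by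
  haveI := Fact.mk hl
  have hd0 : (↑(d⁻¹) : ZMod l) ≠ 0 := Units.ne_zero _
  have hzero : ∀ i : ZMod l, (-(↑d⁻¹ : ZMod l) * i = 0) ↔ i = 0 := by
    intro i
    rw [neg_mul, neg_eq_zero, mul_eq_zero]
    exact or_iff_right hd0
  have hsum : ∀ c : ZMod l, (∑ i : ZMod l, x (c - i)) = ∑ i : ZMod l, x i :=
    fun c => Fintype.sum_equiv (Equiv.subLeft c) _ _ (fun i => rfl)
  simp only [starOp]
  have h1 : ∀ c : ZMod l,
      (∑ i : ZMod l, (if (-(↑d⁻¹ : ZMod l) * i) = 0 then 0 else (-1 : K) ^ f) * x (c - i))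
        = (-1 : K) ^ f * (∑ i : ZMod l, x i) - (-1 : K) ^ f * x c := by
    intro c
    rw [show (∑ i : ZMod l, (if (-(↑d⁻¹ : ZMod l) * i) = 0 then 0 else (-1 : K) ^ f) * x (c - i))
        = ∑ i : ZMod l, (if i = 0 then 0 else (-1 : K) ^ f) * x (c - i) from
      Finset.sum_congr rfl fun i _ => by simp only [hzero],
      starOp_key ((-1 : K) ^ f) (fun i => x (c - i)) 0, hsum c, sub_zero]
  rw [h1 k, show (∑ i : ZMod l, (if (-(↑d⁻¹ : ZMod l) * i) = 0 then 0 else (-1 : K) ^ f) * x (-i))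
      = (∑ i : ZMod l, (if (-(↑d⁻¹ : ZMod l) * i) = 0 then 0 else (-1 : K) ^ f) * x ((0 : ZMod l) - i)) from
    Finset.sum_congr rfl fun i _ => by rw [zero_sub], h1 0, hx0]
  linear_combination (-(x k)) * starOp_pow (K := K) hf

lemma starOp_right (l : ℕ) [NeZero l] (hl : l.Prime)
    {K : Type*} [Field K] (f : ℕ) (hf : 1 ≤ f) (d : (ZMod l)ˣ)
    (x : ZMod l → K) (hx0 : x 0 = 0) (k : ZMod l) :
    starOp l f d x (fun k => if k = 0 then 0 else (-1 : K) ^ f) k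
      = x (-(↑d⁻¹ : ZMod l) * k) := by
  simp only [starOp]
  have h1 : ∀ c : ZMod l,
      (∑ i : ZMod l, x (-(↑d⁻¹ : ZMod l) * i) * (if c - i = 0 then 0 else (-1 : K) ^ f))
        = (-1 : K) ^ f * (∑ i : ZMod l, x (-(↑d⁻¹ : ZMod l) * i))
          - (-1 : K) ^ f * x (-(↑d⁻¹ : ZMod l) * c) := by
    intro c
    rw [show (∑ i : ZMod l, x (-(↑d⁻¹ : ZMod l) * i) * (if c - i = 0 then 0 else (-1 : K) ^ f))
        = ∑ i : ZMod l, (if i = c then 0 else (-1 : K) ^ f) * x (-(↑d⁻¹ : ZMod l) * i) from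
      Finset.sum_congr rfl fun i _ => by
        rw [mul_comm]; congr 1; simp only [sub_eq_zero, eq_comm (a := c)],
      starOp_key ((-1 : K) ^ f) (fun i => x (-(↑d⁻¹ : ZMod l) * i)) c]
  have h2 : (∑ i : ZMod l, x (-(↑d⁻¹ : ZMod l) * i) * (if -i = 0 then 0 else (-1 : K) ^ f))
      = (∑ i : ZMod l, x (-(↑d⁻¹ : ZMod l) * i) * (if (0 : ZMod l) - i = 0 then 0 else (-1 : K) ^ f)) :=
    Finset.sum_congr rfl fun i _ => by rw [zero_sub]
  rw [h1 k, h2, h1 0, mul_zero, hx0]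
  linear_combination (-(x (-(↑d⁻¹ : ZMod l) * k))) * starOp_pow (K := K) hf

/-- The element `𝟙 = (-1)^f(1,…,1)` satisfies `(𝟙 ∗_d x)_k = x_k` and
`(x ∗_d 𝟙)_k = x_{-d⁻¹k}`; in particular `𝟙` is a two-sided identity for `∗_{-1}`. -/
theorem starOp_unital (l : ℕ) [NeZero l] (hl : l.Prime) (hodd : Odd l)
    {K : Type*} [Field K] (f : ℕ) (hf : 1 ≤ f) (d : (ZMod l)ˣ)
    (x : ZMod l → K) (hx0 : x 0 = 0) :
    letI one : ZMod l → K := fun k => if k = 0 then 0 else (-1 : K) ^ f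
    (∀ k : ZMod l, k ≠ 0 → starOp l f d one x k = x k) ∧
    (∀ k : ZMod l, k ≠ 0 → starOp l f d x one k = x (-(↑d⁻¹ : ZMod l) * k)) ∧
    starOp l f (-1) one x = x ∧ starOp l f (-1) x one = x := by
  refine ⟨fun k _ => starOp_left l hl f hf d x hx0 k,
    fun k _ => starOp_right l hl f hf d x hx0 k,
    funext fun k => starOp_left l hl f hf (-1) x hx0 k,
    funext fun k => ?_⟩
  rw [starOp_right l hl f hf (-1) x hx0 k]
  have hinv : ((-1 : (ZMod l)ˣ))⁻¹ = -1 := by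
    rw [eq_comm, eq_inv_iff_mul_eq_one, neg_mul_neg, one_mul]
  rw [hinv]
  congr 1
  push_cast
  ring
end

section
/- Let l be an odd prime, d₁, d₂ ∈ (Z/lZ)×, f ≥ 1, and K a field. With the operation x ∗_d y defined by z_k = (-1)^{f-1}(Σ_{i=1}^{l-1} x_{-d^{-1}i} y_{k-i} - Σ_{i=1}^{l-1} x_{-d^{-1}i} y_{-i}) on K^{l-1}, one has x ∗_{d₁} (y ∗_{d₂} z) = (x ∗_{-d₂^{-1}d₁} y) ∗_{d₂} z for all x, y, z ∈ K^{l-1}. In particular, ∗_{-1} is associative. -/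
open Finset

section Aux

set_option linter.unusedSectionVars false

variable {l : ℕ} [NeZero l] {K : Type*} [Field K]

/-- Twisted convolution. -/
def conv (c : ZMod l) (x y : ZMod l → K) (k : ZMod l) : K :=
  ∑ i : ZMod l, x (c * i) * y (k - i)

lemma starOp_eq (f : ℕ) (d : (ZMod l)ˣ) (x y : ZMod l → K) (k : ZMod l) :
    starOp l f d x y k =
      (-1 : K) ^ (f - 1) * (conv (-(↑d⁻¹ : ZMod l)) x y k - conv (-(↑d⁻¹ : ZMod l)) x y 0) := by
  simp [starOp, conv, zero_sub]

lemma sum_shift (g : ZMod l → K) (k : ZMod l) :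
    ∑ j : ZMod l, g (k - j) = ∑ j : ZMod l, g j := by
  exact Fintype.sum_equiv (Equiv.subLeft k) _ _ (fun j => rfl)

lemma conv_scaled (c : ZMod l) (ε C0 : K) (x : ZMod l → K) (w : ZMod l → K) (k : ZMod l) :
    conv c x (fun m => ε * (w m - C0)) k
      = ε * (conv c x w k - (∑ i : ZMod l, x (c * i)) * C0) := by
  simp only [conv, mul_sub, Finset.mul_sum, Finset.sum_sub_distrib, Finset.sum_mul]
  congr 1
  · exact Finset.sum_congr rfl fun i _ => by ring
  · exact Finset.sum_congr rfl fun i _ => by ring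

lemma conv_scaled_left (c : ZMod l) (ε C0 : K) (w z : ZMod l → K) (k : ZMod l) :
    conv c (fun m => ε * (w m - C0)) z k
      = ε * (conv c w z k - C0 * ∑ i : ZMod l, z (k - i)) := by
  simp only [conv, mul_sub, sub_mul, Finset.mul_sum, Finset.sum_sub_distrib, Finset.sum_mul]
  congr 1 <;> exact Finset.sum_congr rfl fun i _ => by ring

lemma units_val_inv_mul (u : (ZMod l)ˣ) : (↑u⁻¹ : ZMod l) * ↑u = 1 := by
  rw [← Units.val_mul, inv_mul_cancel, Units.val_one]

lemma units_val_mul_inv (u : (ZMod l)ˣ) : (↑u : ZMod l) * ↑u⁻¹ = 1 := by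
  rw [← Units.val_mul, mul_inv_cancel, Units.val_one]

/-- Key reindexing identity. -/
lemma conv_assoc (d₁ d₂ : (ZMod l)ˣ) (x y z : ZMod l → K) (k : ZMod l) :
    conv (-(↑d₁⁻¹ : ZMod l)) x (conv (-(↑d₂⁻¹ : ZMod l)) y z) k
      = conv (-(↑d₂⁻¹ : ZMod l)) (conv ((↑d₁⁻¹ : ZMod l) * (↑d₂ : ZMod l)) x y) z k := by
  simp only [conv, Finset.mul_sum, Finset.sum_mul]
  conv_rhs => rw [Finset.sum_comm]
  refine Fintype.sum_equiv
    (⟨fun i => -(↑d₂⁻¹ : ZMod l) * i, fun a => -(↑d₂ : ZMod l) * a, ?_, ?_⟩ : ZMod l ≃ ZMod l)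
    _ _ ?_
  · intro i
    have h := units_val_mul_inv (l := l) d₂
    simp only []
    linear_combination i * h
  · intro a
    have h := units_val_inv_mul (l := l) d₂
    simp only []
    linear_combination a * h
  · intro i
    refine Fintype.sum_equiv (Equiv.addRight i) _ _ ?_
    intro j
    have h1 : (↑d₁⁻¹ : ZMod l) * (↑d₂ : ZMod l) * (-(↑d₂⁻¹ : ZMod l) * i)
        = -(↑d₁⁻¹ : ZMod l) * i := by
      linear_combination (-(↑d₁⁻¹ : ZMod l) * i) * units_val_mul_inv (l := l) d₂
    have h2 : -(↑d₂⁻¹ : ZMod l) * (j + i) - -(↑d₂⁻¹ : ZMod l) * i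
        = -(↑d₂⁻¹ : ZMod l) * j := by ring
    have h3 : k - (j + i) = k - i - j := by ring
    simp only [Equiv.coe_fn_mk, Equiv.coe_addRight, h1, h2, h3]
    ring

lemma starOp_assoc_main (f : ℕ) (d₁ d₂ : (ZMod l)ˣ) (x y z : ZMod l → K) :
    starOp l f d₁ x (starOp l f d₂ y z) = starOp l f d₂ (starOp l f (-(d₂⁻¹ * d₁)) x y) z := by
  funext k
  have hc₃ : (-(↑(-(d₂⁻¹ * d₁))⁻¹ : ZMod l)) = ((↑d₁⁻¹ : ZMod l) * (↑d₂ : ZMod l)) := by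
    have : (-(d₂⁻¹ * d₁))⁻¹ = -(d₁⁻¹ * d₂) := by
      rw [inv_neg, mul_inv, inv_inv, mul_comm]
    rw [this, Units.val_neg, neg_neg, Units.val_mul]
  have hw : starOp l f d₂ y z = fun m =>
      (-1 : K) ^ (f - 1) * (conv (-(↑d₂⁻¹ : ZMod l)) y z m - conv (-(↑d₂⁻¹ : ZMod l)) y z 0) := by
    funext m; exact starOp_eq f d₂ y z m
  have hu : starOp l f (-(d₂⁻¹ * d₁)) x y = fun m =>
      (-1 : K) ^ (f - 1) * (conv ((↑d₁⁻¹ : ZMod l) * (↑d₂ : ZMod l)) x y m -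
        conv ((↑d₁⁻¹ : ZMod l) * (↑d₂ : ZMod l)) x y 0) := by
    funext m; rw [starOp_eq, hc₃]
  rw [hw, hu, starOp_eq, starOp_eq, conv_scaled, conv_scaled, conv_scaled_left,
    conv_scaled_left, conv_assoc, conv_assoc, sum_shift z k, sum_shift z 0]
  ring

end Aux

/-- `x ∗_{d₁} (y ∗_{d₂} z) = (x ∗_{-d₂⁻¹d₁} y) ∗_{d₂} z`; in particular `∗_{-1}` is
associative. -/
theorem starOp_assoc_law (l : ℕ) [NeZero l] (hl : l.Prime) (hodd : Odd l)
    {K : Type*} [Field K] (f : ℕ) (hf : 1 ≤ f) (d₁ d₂ : (ZMod l)ˣ)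
    (x y z : ZMod l → K) (hx0 : x 0 = 0) (hy0 : y 0 = 0) (hz0 : z 0 = 0) :
    starOp l f d₁ x (starOp l f d₂ y z) = starOp l f d₂ (starOp l f (-(d₂⁻¹ * d₁)) x y) z ∧
    starOp l f (-1) x (starOp l f (-1) y z) = starOp l f (-1) (starOp l f (-1) x y) z := by
  constructor
  · exact starOp_assoc_main f d₁ d₂ x y z
  · have h := starOp_assoc_main (l := l) (K := K) f (-1) (-1) x y z
    have h2 : (-((-1 : (ZMod l)ˣ)⁻¹ * -1)) = (-1 : (ZMod l)ˣ) := by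
      simp
    rwa [h2] at h
end

section
/- Let l be an odd prime, d ∈ (Z/lZ)×, f ≥ 1, and K a field with Gal(K(ζ_l)/K) ≅ (Z/lZ)×. For x ∈ K^{l-1} let α_x := (-1)^{f-1} Σ_{i=1}^{l-1} x_i ζ_l^i ∈ L = K(ζ_l). Then for all x, y ∈ K^{l-1}, α_{x ∗_d y} = σ_{-d}(α_x)·α_y, where σ_{-d} ∈ Gal(L/K) sends ζ_l to ζ_l^{-d} and ∗_d is the operation (x ∗_d y)_k = (-1)^{f-1}(Σ_{i=1}^{l-1} x_{-d^{-1}i} y_{k-i} - Σ_{i=1}^{l-1} x_{-d^{-1}i} y_{-i}). -/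
open Finset

/-- `α_{x ∗_d y} = σ_{-d}(α_x)·α_y`, where `α_x = (-1)^{f-1} Σ x_i ζ_l^i` and `σ_{-d}` is the
Galois automorphism with `σ_{-d}(ζ_l) = ζ_l^{-d}`. -/
theorem alpha_starOp (l : ℕ) [NeZero l] (hl : l.Prime) (hodd : Odd l)
    (f : ℕ) (hf : 1 ≤ f) (d : (ZMod l)ˣ)
    {K L : Type*} [Field K] [Field L] [Algebra K L]
    (ζ : L) (hζ : IsPrimitiveRoot ζ l)
    (hind : LinearIndependent K fun i : Fin (l - 1) => ζ ^ ((i : ℕ) + 1))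
    (σ : L ≃ₐ[K] L) (hσ : σ ζ = ζ ^ (((-d : (ZMod l)ˣ) : ZMod l)).val)
    (x y : ZMod l → K) (hx0 : x 0 = 0) (hy0 : y 0 = 0) :
    letI α : (ZMod l → K) → L := fun v =>
      (-1 : L) ^ (f - 1) * ∑ i : ZMod l, algebraMap K L (v i) * ζ ^ i.val
    α (starOp l f d x y) = σ (α x) * α y := by
  haveI := Fact.mk hl
  have h1l : 1 < l := hl.one_lt
  have hζl : ζ ^ l = 1 := hζ.pow_eq_one
  set aK := algebraMap K L with haK
  set E : L := (-1 : L) ^ (f - 1) with hE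
  set c : ZMod l := ((-d : (ZMod l)ˣ) : ZMod l) with hc
  have hpow : ∀ a b : ZMod l, ζ ^ a.val * ζ ^ b.val = ζ ^ (a + b).val := fun a b => by
    rw [← pow_add, ZMod.val_add, ← pow_eq_pow_mod _ hζl]
  have hmulpow : ∀ a b : ZMod l, (ζ ^ a.val) ^ b.val = ζ ^ (a * b).val := fun a b => by
    rw [← pow_mul, ZMod.val_mul, ← pow_eq_pow_mod _ hζl]
  have hsum0 : ∑ k : ZMod l, ζ ^ k.val = 0 := by
    rw [← hζ.geom_sum_eq_zero h1l]
    exact Finset.sum_nbij' (fun k => k.val) (fun n => (n : ZMod l))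
      (fun a _ => Finset.mem_range.2 (ZMod.val_lt a))
      (fun a _ => Finset.mem_univ _)
      (fun a _ => ZMod.natCast_rightInverse a)
      (fun a ha => ZMod.val_natCast_of_lt (Finset.mem_range.1 ha))
      (fun a _ => rfl)
  have hEE : E * E = 1 := by rw [hE, ← mul_pow]; norm_num
  have hcne : c ≠ 0 := (-d).ne_zero
  have hdc : ∀ i : ZMod l, -(↑d⁻¹ : ZMod l) * (c * i) = i := by
    intro i
    have h1 : (↑d⁻¹ : ZMod l) * ↑d = 1 := by
      rw [← Units.val_mul, inv_mul_cancel, Units.val_one]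
    have hcd : c = -(↑d : ZMod l) := by rw [hc, Units.val_neg]
    rw [hcd]; ring_nf
    rw [h1, one_mul]
  -- σ (α x) computation
  show E * ∑ i : ZMod l, aK (starOp l f d x y i) * ζ ^ i.val =
      σ (E * ∑ i : ZMod l, aK (x i) * ζ ^ i.val) * (E * ∑ i : ZMod l, aK (y i) * ζ ^ i.val)
  have hσα : σ (E * ∑ i : ZMod l, aK (x i) * ζ ^ i.val)
      = E * ∑ i : ZMod l, aK (x i) * ζ ^ (c * i).val := by
    rw [map_mul, hE, map_pow, map_neg, map_one, map_sum]
    congr 1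
    refine Finset.sum_congr rfl fun i _ => ?_
    rw [map_mul, AlgEquiv.commutes, map_pow, hσ, hmulpow]
  rw [hσα]
  -- RHS as a double sum
  have hRHS : (E * ∑ i : ZMod l, aK (x i) * ζ ^ (c * i).val) *
      (E * ∑ j : ZMod l, aK (y j) * ζ ^ j.val)
      = ∑ i : ZMod l, ∑ j : ZMod l, aK (x i) * aK (y j) * ζ ^ (c * i + j).val := by
    rw [mul_mul_mul_comm, hEE, one_mul, Finset.sum_mul_sum]
    refine Finset.sum_congr rfl fun i _ => Finset.sum_congr rfl fun j _ => ?_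
    rw [mul_mul_mul_comm, hpow]
  rw [hRHS]
  -- LHS
  simp only [starOp, map_mul, map_sub, map_sum, map_pow, map_neg, map_one, ← hE]
  calc E * ∑ k : ZMod l,
        (E * ((∑ i : ZMod l, aK (x (-(↑d⁻¹ : ZMod l) * i)) * aK (y (k - i)))
          - ∑ i : ZMod l, aK (x (-(↑d⁻¹ : ZMod l) * i)) * aK (y (-i)))) * ζ ^ k.val
      = (E * E) * ∑ k : ZMod l,
        ((∑ i : ZMod l, aK (x (-(↑d⁻¹ : ZMod l) * i)) * aK (y (k - i)))
          - ∑ i : ZMod l, aK (x (-(↑d⁻¹ : ZMod l) * i)) * aK (y (-i))) * ζ ^ k.val := by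
        simp only [Finset.mul_sum, mul_assoc]
    _ = ∑ k : ZMod l,
        ((∑ i : ZMod l, aK (x (-(↑d⁻¹ : ZMod l) * i)) * aK (y (k - i))) * ζ ^ k.val
          - (∑ i : ZMod l, aK (x (-(↑d⁻¹ : ZMod l) * i)) * aK (y (-i))) * ζ ^ k.val) := by
        rw [hEE, one_mul]
        exact Finset.sum_congr rfl fun k _ => sub_mul _ _ _
    _ = ∑ k : ZMod l,
        (∑ i : ZMod l, aK (x (-(↑d⁻¹ : ZMod l) * i)) * aK (y (k - i))) * ζ ^ k.val := by
        rw [Finset.sum_sub_distrib, ← Finset.mul_sum, hsum0, mul_zero, sub_zero]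
    _ = ∑ i : ZMod l, ∑ k : ZMod l,
        aK (x (-(↑d⁻¹ : ZMod l) * i)) * aK (y (k - i)) * ζ ^ k.val := by
        simp only [Finset.sum_mul]
        exact Finset.sum_comm
    _ = ∑ i : ZMod l, ∑ j : ZMod l,
        aK (x (-(↑d⁻¹ : ZMod l) * i)) * aK (y j) * ζ ^ (i + j).val := by
        refine Finset.sum_congr rfl fun i _ => ?_
        refine Fintype.sum_equiv (Equiv.subRight i) _ _ fun k => ?_
        simp only [Equiv.subRight_apply]
        have h : i + (k - i) = k := by ring
        rw [h]
    _ = ∑ i : ZMod l, ∑ j : ZMod l, aK (x i) * aK (y j) * ζ ^ (c * i + j).val := by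
        refine (Fintype.sum_bijective (fun i => c * i) (mulLeft_bijective₀ c hcne) _ _ fun i => ?_).symm
        refine Finset.sum_congr rfl fun j _ => ?_
        rw [hdc i]
end

section
/- Let l be an odd prime, d ∈ (Z/lZ)×, f ≥ 1, K a field with [K(ζ_l):K] = l-1, and x = (x₁,…,x_{l-1}) ∈ K^{l-1}. Let M_d be the (l-1)×(l-1) matrix with entries M_d[k,j] = (-1)^{f-1}(x_{d^{-1}(k-j)} - x_{d^{-1}k}) for 1 ≤ k, j ≤ l-1 (indices mod l, x₀ = 0). Then det M_d = N_{L/K}(α_x), where L = K(ζ_l), α_x = (-1)^{f-1} Σ_{i=1}^{l-1} x_i ζ_l^i, and N_{L/K} is the field norm. -/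
open Finset

section Aux

set_option linter.unusedSectionVars false

variable {l : ℕ} [NeZero l]

private lemma iota_val (hl : 1 < l) (k : Fin (l - 1)) :
    (((k : ℕ) + 1 : ℕ) : ZMod l).val = (k : ℕ) + 1 :=
  ZMod.val_cast_of_lt (by have := k.isLt; omega)

private lemma iota_ne_zero (hl : 1 < l) (k : Fin (l - 1)) :
    (((k : ℕ) + 1 : ℕ) : ZMod l) ≠ 0 := by
  intro h
  have := iota_val hl k
  rw [h] at this
  simp [ZMod.val_zero] at this

/-- The equivalence between `Fin (l-1)` and nonzero residues mod `l`. -/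
private def eNZ (hl : 1 < l) : Fin (l - 1) ≃ {a : ZMod l // a ≠ 0} where
  toFun k := ⟨(((k : ℕ) + 1 : ℕ) : ZMod l), iota_ne_zero hl k⟩
  invFun a := ⟨a.1.val - 1, by
    have h1 : a.1.val < l := ZMod.val_lt a.1
    have h2 : a.1.val ≠ 0 := fun h => a.2 ((ZMod.val_eq_zero a.1).mp h)
    omega⟩
  left_inv k := by
    ext
    simp only [iota_val hl k]
    omega
  right_inv a := by
    have h1 : a.1.val < l := ZMod.val_lt a.1
    have h2 : a.1.val ≠ 0 := fun h => a.2 ((ZMod.val_eq_zero a.1).mp h)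
    ext
    simp only
    rw [Nat.sub_add_cancel (by omega), ZMod.natCast_val, ZMod.cast_id]

private lemma eNZ_apply_coe (hl : 1 < l) (k : Fin (l - 1)) :
    ((eNZ hl k : {a : ZMod l // a ≠ 0}) : ZMod l) = (((k : ℕ) + 1 : ℕ) : ZMod l) := rfl

/-- Multiplication by a unit as a permutation of nonzero residues. -/
private def unitPerm (hl : l.Prime) (u : (ZMod l)ˣ) :
    {a : ZMod l // a ≠ 0} ≃ {a : ZMod l // a ≠ 0} := by
  haveI := Fact.mk hl
  exact
  { toFun := fun a => ⟨(u : ZMod l) * a, mul_ne_zero (Units.ne_zero u) a.2⟩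
    invFun := fun a => ⟨((u⁻¹ : (ZMod l)ˣ) : ZMod l) * a, mul_ne_zero (Units.ne_zero u⁻¹) a.2⟩
    left_inv := fun a => by
      ext
      show ((u⁻¹ : (ZMod l)ˣ) : ZMod l) * ((u : ZMod l) * (a : ZMod l)) = (a : ZMod l)
      rw [← mul_assoc, ← Units.val_mul, inv_mul_cancel, Units.val_one, one_mul]
    right_inv := fun a => by
      ext
      show ((u : (ZMod l)ˣ) : ZMod l) * (((u⁻¹ : (ZMod l)ˣ) : ZMod l) * (a : ZMod l)) = (a : ZMod l)
      rw [← mul_assoc, ← Units.val_mul, mul_inv_cancel, Units.val_one, one_mul] }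

/-- The permutation of `Fin (l-1)` induced by multiplication by a unit. -/
private def finPerm (hl : l.Prime) (u : (ZMod l)ˣ) : Fin (l - 1) ≃ Fin (l - 1) :=
  (eNZ hl.one_lt).trans ((unitPerm hl u).trans (eNZ hl.one_lt).symm)

private lemma iota_finPerm (hl : l.Prime) (u : (ZMod l)ˣ) (k : Fin (l - 1)) :
    ((((finPerm hl u k : Fin (l - 1)) : ℕ) + 1 : ℕ) : ZMod l)
      = (u : ZMod l) * (((k : ℕ) + 1 : ℕ) : ZMod l) := by
  have h : ∀ a : {a : ZMod l // a ≠ 0},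
      ((((eNZ hl.one_lt).symm a : Fin (l - 1)) : ℕ) + 1 : ℕ) = (a : ZMod l) := by
    intro a
    conv_rhs => rw [← (eNZ hl.one_lt).apply_symm_apply a]
    rfl
  exact h _

/-- Sum over nonzero residues equals sum over `Fin (l-1)`. -/
private lemma sum_iota {A : Type*} [AddCommMonoid A] (hl : 1 < l) (F : ZMod l → A) :
    ∑ k : Fin (l - 1), F (((k : ℕ) + 1 : ℕ) : ZMod l)
      = ∑ m ∈ (univ : Finset (ZMod l)).erase 0, F m := by
  rw [Finset.sum_subtype (p := fun a : ZMod l => a ≠ 0)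
    ((univ : Finset (ZMod l)).erase 0) (fun m => by simp) F]
  exact Fintype.sum_equiv (eNZ hl) _ _ (fun k => rfl)

private lemma zmod_pow_val_add {L : Type*} [Field L] {ζ : L} (hζ : IsPrimitiveRoot ζ l)
    (a b : ZMod l) : ζ ^ (a + b).val = ζ ^ a.val * ζ ^ b.val := by
  rw [← pow_add, ZMod.val_add]
  conv_rhs => rw [← Nat.div_add_mod (a.val + b.val) l]
  rw [pow_add, pow_mul, hζ.pow_eq_one, one_pow, one_mul]

end Aux

set_option maxHeartbeats 1000000 in
private theorem det_core (l : ℕ) [NeZero l] (hl : l.Prime) (d : (ZMod l)ˣ)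
    {K L : Type*} [Field K] [Field L] [Algebra K L] [FiniteDimensional K L]
    (hdim : Module.finrank K L = l - 1)
    (ζ : L) (hζ : IsPrimitiveRoot ζ l)
    (hgen : Algebra.adjoin K ({ζ} : Set L) = ⊤)
    (x : ZMod l → K) (hx0 : x 0 = 0) :
    (Matrix.of fun k j : Fin (l - 1) =>
        (x ((↑d⁻¹ : ZMod l) * ((((k : ℕ) + 1 : ℕ) : ZMod l) - (((j : ℕ) + 1 : ℕ) : ZMod l)))
          - x ((↑d⁻¹ : ZMod l) * (((k : ℕ) + 1 : ℕ) : ZMod l)))).det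
      = Algebra.norm K (∑ i : ZMod l, algebraMap K L (x i) * ζ ^ i.val) := by
  haveI := Fact.mk hl
  have h2 : 1 < l := hl.one_lt
  have hζ0 : ζ ≠ 0 := hζ.ne_zero (NeZero.ne l)
  have hint : IsIntegral K ζ := IsIntegral.of_finite K ζ
  let pb : PowerBasis K L := (Algebra.adjoin.powerBasis hint).map
    ((Subalgebra.equivOfEq _ _ hgen).trans Subalgebra.topEquiv)
  have hgenpb : pb.gen = ζ := rfl
  have hdimpb : pb.dim = l - 1 := by rw [← pb.finrank, hdim]
  let μ : L ≃ₗ[K] L := LinearEquiv.ofLinear (LinearMap.mulLeft K ζ) (LinearMap.mulLeft K ζ⁻¹)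
    (by ext y; simp [LinearMap.mulLeft_apply, ← mul_assoc, mul_inv_cancel₀ hζ0])
    (by ext y; simp [LinearMap.mulLeft_apply, ← mul_assoc, inv_mul_cancel₀ hζ0])
  let b : Module.Basis (Fin (l - 1)) K L := (pb.basis.reindex (finCongr hdimpb)).map μ
  have hb : ∀ k : Fin (l - 1), b k = ζ ^ ((((k : ℕ) + 1 : ℕ) : ZMod l).val) := by
    intro k
    have h1 : b k = ζ * pb.gen ^ (((finCongr hdimpb).symm k : Fin pb.dim) : ℕ) := by
      simp [b, μ, Module.Basis.map_apply, Module.Basis.reindex_apply, PowerBasis.coe_basis,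
        LinearMap.mulLeft_apply]
    rw [h1, hgenpb, iota_val h2]
    have h3 : (((finCongr hdimpb).symm k : Fin pb.dim) : ℕ) = (k : ℕ) := by
      simp [finCongr]
    rw [h3, pow_succ']
  have hsum0 : ∑ m : ZMod l, ζ ^ m.val = 0 := by
    rw [← hζ.geom_sum_eq_zero h2]
    refine Finset.sum_bij (fun (m : ZMod l) _ => m.val) (fun m _ => ?_) ?_ ?_ ?_
    · exact Finset.mem_range.mpr (ZMod.val_lt m)
    · intro a _ c _ h
      exact ZMod.val_injective l h
    · intro i hi
      exact ⟨(i : ZMod l), Finset.mem_univ _, ZMod.val_cast_of_lt (Finset.mem_range.mp hi)⟩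
    · intro a _; rfl
  have herase : ∑ m ∈ (univ : Finset (ZMod l)).erase 0, ζ ^ m.val = -1 := by
    have h := hsum0
    rw [← Finset.sum_erase_add _ _ (Finset.mem_univ (0 : ZMod l))] at h
    simp only [ZMod.val_zero, pow_zero] at h
    linear_combination h
  have key : ∀ j : Fin (l - 1),
      (∑ i : ZMod l, algebraMap K L (x i) * ζ ^ i.val) * b j
        = ∑ k : Fin (l - 1),
            (x ((((k : ℕ) + 1 : ℕ) : ZMod l) - (((j : ℕ) + 1 : ℕ) : ZMod l))
              - x (-(((j : ℕ) + 1 : ℕ) : ZMod l))) • b k := by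
    intro j
    set t : ZMod l := (((j : ℕ) + 1 : ℕ) : ZMod l) with ht
    have RHS_eq : (∑ k : Fin (l - 1),
          (x ((((k : ℕ) + 1 : ℕ) : ZMod l) - t) - x (-t)) • b k)
        = ∑ m ∈ (univ : Finset (ZMod l)).erase 0,
            (algebraMap K L (x (m - t)) - algebraMap K L (x (-t))) * ζ ^ m.val := by
      rw [← sum_iota h2
        (fun m => (algebraMap K L (x (m - t)) - algebraMap K L (x (-t))) * ζ ^ m.val)]
      refine Finset.sum_congr rfl fun k _ => ?_
      rw [hb k, Algebra.smul_def, map_sub]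
    rw [RHS_eq, hb j, Finset.sum_mul]
    have step1 : ∀ i : ZMod l, algebraMap K L (x i) * ζ ^ i.val * ζ ^ t.val
        = algebraMap K L (x i) * ζ ^ (i + t).val := by
      intro i; rw [mul_assoc, ← zmod_pow_val_add hζ]
    simp_rw [← ht, step1]
    rw [show (∑ i : ZMod l, algebraMap K L (x i) * ζ ^ (i + t).val)
        = ∑ m : ZMod l, algebraMap K L (x (m - t)) * ζ ^ m.val from
      Fintype.sum_equiv (Equiv.addRight t) _ _ (fun i => by simp)]
    rw [← Finset.sum_erase_add _ _ (Finset.mem_univ (0 : ZMod l))]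
    simp only [ZMod.val_zero, pow_zero, zero_sub, mul_one]
    simp_rw [sub_mul]
    rw [Finset.sum_sub_distrib, ← Finset.mul_sum, herase]
    ring
  have hC : Algebra.leftMulMatrix b (∑ i : ZMod l, algebraMap K L (x i) * ζ ^ i.val)
      = Matrix.of (fun k j : Fin (l - 1) =>
          x ((((k : ℕ) + 1 : ℕ) : ZMod l) - (((j : ℕ) + 1 : ℕ) : ZMod l))
            - x (-(((j : ℕ) + 1 : ℕ) : ZMod l))) := by
    ext k j
    rw [Algebra.leftMulMatrix_eq_repr_mul, key j, Module.Basis.repr_sum_self]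
    rfl
  rw [Algebra.norm_eq_matrix_det b, hC]
  have hM : (Matrix.of fun k j : Fin (l - 1) =>
        (x ((↑d⁻¹ : ZMod l) * ((((k : ℕ) + 1 : ℕ) : ZMod l) - (((j : ℕ) + 1 : ℕ) : ZMod l)))
          - x ((↑d⁻¹ : ZMod l) * (((k : ℕ) + 1 : ℕ) : ZMod l))))
      = ((Matrix.of (fun k j : Fin (l - 1) =>
          x ((((k : ℕ) + 1 : ℕ) : ZMod l) - (((j : ℕ) + 1 : ℕ) : ZMod l))
            - x (-(((j : ℕ) + 1 : ℕ) : ZMod l)))).transpose).submatrix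
          (finPerm hl (-d⁻¹)) (finPerm hl (-d⁻¹)) := by
    ext k j
    simp only [Matrix.submatrix_apply, Matrix.transpose_apply, Matrix.of_apply]
    rw [iota_finPerm hl (-d⁻¹) k, iota_finPerm hl (-d⁻¹) j]
    have hu : (((-d⁻¹ : (ZMod l)ˣ)) : ZMod l) = -((d⁻¹ : (ZMod l)ˣ) : ZMod l) :=
      Units.val_neg d⁻¹
    rw [hu]
    congr 1
    · congr 1; ring
    · congr 1; ring
  rw [hM, Matrix.det_submatrix_equiv_self, Matrix.det_transpose]

/-- Lemma 6.2: the representation matrix `M_d` of left `∗_d`-multiplication by `x`, with entries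
`M_d[k,j] = (-1)^{f-1}(x_{d⁻¹(k-j)} - x_{d⁻¹k})`, has determinant `N_{L/K}(α_x)` where
`α_x = (-1)^{f-1} Σ x_i ζ_l^i` and `L = K(ζ_l)` has degree `l-1` over `K`. -/
theorem det_Md_eq_norm (l : ℕ) [NeZero l] (hl : l.Prime) (hodd : Odd l)
    (f : ℕ) (hf : 1 ≤ f) (d : (ZMod l)ˣ)
    {K L : Type*} [Field K] [Field L] [Algebra K L] [FiniteDimensional K L]
    (hdim : Module.finrank K L = l - 1)
    (ζ : L) (hζ : IsPrimitiveRoot ζ l)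
    (hgen : Algebra.adjoin K ({ζ} : Set L) = ⊤)
    (x : ZMod l → K) (hx0 : x 0 = 0) :
    letI ι : Fin (l - 1) → ZMod l := fun i => (((i : ℕ) + 1 : ℕ) : ZMod l)
    letI M : Matrix (Fin (l - 1)) (Fin (l - 1)) K := Matrix.of fun k j =>
      (-1 : K) ^ (f - 1) * (x ((↑d⁻¹ : ZMod l) * (ι k - ι j)) - x ((↑d⁻¹ : ZMod l) * ι k))
    M.det = Algebra.norm K
      ((-1 : L) ^ (f - 1) * ∑ i : ZMod l, algebraMap K L (x i) * ζ ^ i.val) := by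
  show (Matrix.of fun k j : Fin (l - 1) =>
      (-1 : K) ^ (f - 1) *
        (x ((↑d⁻¹ : ZMod l) * ((((k : ℕ) + 1 : ℕ) : ZMod l) - (((j : ℕ) + 1 : ℕ) : ZMod l)))
          - x ((↑d⁻¹ : ZMod l) * (((k : ℕ) + 1 : ℕ) : ZMod l)))).det
    = Algebra.norm K ((-1 : L) ^ (f - 1) * ∑ i : ZMod l, algebraMap K L (x i) * ζ ^ i.val)
  have hsm : (Matrix.of fun k j : Fin (l - 1) =>
      (-1 : K) ^ (f - 1) *
        (x ((↑d⁻¹ : ZMod l) * ((((k : ℕ) + 1 : ℕ) : ZMod l) - (((j : ℕ) + 1 : ℕ) : ZMod l)))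
          - x ((↑d⁻¹ : ZMod l) * (((k : ℕ) + 1 : ℕ) : ZMod l))))
      = ((-1 : K) ^ (f - 1)) • (Matrix.of fun k j : Fin (l - 1) =>
        (x ((↑d⁻¹ : ZMod l) * ((((k : ℕ) + 1 : ℕ) : ZMod l) - (((j : ℕ) + 1 : ℕ) : ZMod l)))
          - x ((↑d⁻¹ : ZMod l) * (((k : ℕ) + 1 : ℕ) : ZMod l)))) := by
    ext k j
    simp [Matrix.smul_apply]
  have hcl : ((-1 : L)) ^ (f - 1) = algebraMap K L ((-1 : K) ^ (f - 1)) := by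
    simp
  rw [hsm, Matrix.det_smul, Fintype.card_fin, hcl,
    map_mul (Algebra.norm K), Algebra.norm_algebraMap, hdim,
    det_core l hl d hdim ζ hζ hgen x hx0]
end
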